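/- Let (M_k)_{k≥0} be a nonnegative stochastic process adapted to a filtration (F_k) with E[M_{k+1} | F_k] ≤ M_k + β for a constant β ≥ 0, and M_0 ≤ γ almost surely. Then for any horizon H ∈ ℕ, P( max_{0 ≤ k ≤ H} M_k ≥ 1 ) ≤ γ + βH. -/

import Mathlib

open MeasureTheory

/-- Nonnegative c-martingale (β-martingale) inequality of Kushner: if `(M_k)` is a
nonnegative adapted process with `E[M_{k+1} | F_k] ≤ M_k + β` and `M_0 ≤ γ` a.s., then
`P(max_{0≤k≤H} M_k ≥ 1) ≤ γ + βH`. -/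
theorem c_martingale_inequality
    {Ω : Type*} {m0 : MeasurableSpace Ω} (P : Measure Ω) [IsProbabilityMeasure P]
    (ℱ : Filtration ℕ m0) (M : ℕ → Ω → ℝ)
    (hadapted : Adapted ℱ M)
    (hint : ∀ k, Integrable (M k) P)
    (hnonneg : ∀ k ω, 0 ≤ M k ω)
    (β γ : ℝ) (hβ : 0 ≤ β) (hγ : 0 ≤ γ)
    (hcond : ∀ k, P[M (k + 1) | ℱ k] ≤ᵐ[P] fun ω => M k ω + β)
    (hM0 : ∀ᵐ ω ∂P, M 0 ω ≤ γ)
    (H : ℕ) :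
    P {ω | ∃ k ≤ H, 1 ≤ M k ω} ≤ ENNReal.ofReal (γ + β * H) := by
  classical
  -- first-hitting decomposition
  set C : ℕ → Set Ω := fun k => {ω | ∀ j < k, M j ω < 1} with hCdef
  set B : ℕ → Set Ω := fun k => C k ∩ {ω | 1 ≤ M k ω} with hBdef
  have hMmeas : ∀ k, Measurable[ℱ k] (M k) := fun k => (hadapted k)
  have hMmeas0 : ∀ k, Measurable (M k) := fun k => (hMmeas k).mono (ℱ.le k) le_rfl
  have hCsucc : ∀ k, C (k + 1) = C k ∩ {ω | M k ω < 1} := by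
    intro k
    ext ω
    simp only [hCdef, Set.mem_setOf_eq, Set.mem_inter_iff, Nat.lt_succ_iff_lt_or_eq]
    constructor
    · exact fun h => ⟨fun j hj => h j (Or.inl hj), h k (Or.inr rfl)⟩
    · rintro ⟨h1, h2⟩ j (hj | rfl)
      · exact h1 j hj
      · exact h2
  have hCFmeas : ∀ k, MeasurableSet[ℱ k] (C (k + 1)) := by
    intro k
    induction k with
    | zero =>
      rw [hCsucc 0]
      have : C 0 = Set.univ := by ext ω; simp [hCdef]
      rw [this, Set.univ_inter]
      exact measurableSet_lt (hMmeas 0) measurable_const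
    | succ n ih =>
      rw [hCsucc (n + 1)]
      exact ((ℱ.mono n.le_succ) _ ih).inter
        (measurableSet_lt (hMmeas (n + 1)) measurable_const)
  have hCmeas : ∀ k, MeasurableSet (C k) := by
    intro k
    cases k with
    | zero => simpa [hCdef] using (MeasurableSet.univ : MeasurableSet (Set.univ : Set Ω))
    | succ n => exact ℱ.le n _ (hCFmeas n)
  have hBmeas : ∀ k, MeasurableSet (B k) := fun k =>
    (hCmeas k).inter (measurableSet_le measurable_const (hMmeas0 k))
  -- the value sequence
  set f : ℕ → ℝ := fun k => ∫ ω in C k, M k ω ∂P with hfdef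
  have hsplit : ∀ k, f k = (∫ ω in C (k + 1), M k ω ∂P) + ∫ ω in B k, M k ω ∂P := by
    intro k
    have hdisj : Disjoint (C (k + 1)) (B k) := by
      rw [hCsucc k]
      refine Set.disjoint_left.2 ?_
      rintro ω ⟨-, h1⟩ ⟨-, h2⟩
      simp only [Set.mem_setOf_eq] at h1 h2
      linarith
    have hunion : C (k + 1) ∪ B k = C k := by
      rw [hCsucc k, hBdef]
      rw [← Set.inter_union_distrib_left]
      have : {ω | M k ω < 1} ∪ {ω | 1 ≤ M k ω} = Set.univ := by
        ext ω; simp [lt_or_ge (M k ω) 1]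
      rw [this, Set.inter_univ]
    simp only [hfdef]
    rw [← hunion,
      setIntegral_union hdisj (hBmeas k) ((hint k).integrableOn) ((hint k).integrableOn)]
  have hPB : ∀ k, (P (B k)).toReal ≤ ∫ ω in B k, M k ω ∂P := by
    intro k
    have := setIntegral_ge_of_const_le (μ := P) (hBmeas k) (measure_ne_top P _)
      (fun ω hω => hω.2) ((hint k).integrableOn)
    simp only [smul_eq_mul, mul_one] at this
    exact this
  -- main step inequality
  have hstep : ∀ k, f (k + 1) + (P (B k)).toReal ≤ f k + β := by
    intro k
    have h1 : f (k + 1) = ∫ ω in C (k + 1), (P[M (k + 1) | ℱ k]) ω ∂P :=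
      (setIntegral_condExp (ℱ.le k) (hint (k + 1)) (hCFmeas k)).symm
    have h2 : (∫ ω in C (k + 1), (P[M (k + 1) | ℱ k]) ω ∂P)
        ≤ ∫ ω in C (k + 1), (M k ω + β) ∂P := by
      refine setIntegral_mono_ae integrable_condExp.integrableOn
        ((hint k).add (integrable_const β)).integrableOn (hcond k)
    have h3 : (∫ ω in C (k + 1), (M k ω + β) ∂P)
        = (∫ ω in C (k + 1), M k ω ∂P) + β * (P (C (k + 1))).toReal := by
      rw [integral_add ((hint k).integrableOn) (integrable_const β).integrableOn,
        setIntegral_const, smul_eq_mul, mul_comm]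
      rfl
    have h4 : β * (P (C (k + 1))).toReal ≤ β := by
      have : (P (C (k + 1))).toReal ≤ 1 := by
        have := prob_le_one (μ := P) (s := C (k + 1))
        simpa using ENNReal.toReal_mono (by simp) this
      nlinarith
    have := hsplit k
    have := hPB k
    linarith
  -- telescoping sum
  have hsum : ∀ n, (∑ k ∈ Finset.range n, (P (B k)).toReal) + f n ≤ f 0 + β * n := by
    intro n
    induction n with
    | zero => simp
    | succ n ih =>
      rw [Finset.sum_range_succ]
      have := hstep n
      push_cast
      linarith
  have hf0 : f 0 ≤ γ := by
    have hC0 : C 0 = Set.univ := by ext ω; simp [hCdef]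
    have : f 0 = ∫ ω, M 0 ω ∂P := by rw [hfdef]; simp [hC0]
    rw [this]
    calc ∫ ω, M 0 ω ∂P ≤ ∫ _, γ ∂P :=
          integral_mono_ae (hint 0) (integrable_const γ) hM0
      _ = γ := by simp
  have hfnn : ∀ n, 0 ≤ f n := fun n =>
    setIntegral_nonneg (hCmeas n) (fun ω _ => hnonneg n ω)
  -- total bound on the sum including k = H
  have htotal : (∑ k ∈ Finset.range (H + 1), (P (B k)).toReal) ≤ γ + β * H := by
    rw [Finset.sum_range_succ]
    have h1 := hsum H
    have h2 : (P (B H)).toReal ≤ f H := by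
      have h3 : ∫ ω in B H, M H ω ∂P ≤ f H := by
        have := hsplit H
        have := setIntegral_nonneg (μ := P) ((ℱ.le H) _ (hCFmeas H)) (fun ω _ => hnonneg H ω)
        linarith
      linarith [hPB H]
    linarith
  -- covering the event by the B k's
  have hcover : {ω | ∃ k ≤ H, 1 ≤ M k ω} ⊆ ⋃ k ∈ Finset.range (H + 1), B k := by
    intro ω hω
    obtain ⟨k, hkH, hk⟩ := hω
    have hex : ∃ k, 1 ≤ M k ω := ⟨k, hk⟩
    set j := Nat.find hex with hj
    have hjle : j ≤ k := Nat.find_min' hex hk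
    refine Set.mem_biUnion (Finset.mem_range.2 (Nat.lt_succ_of_le (hjle.trans hkH))) ?_
    refine ⟨fun i hi => ?_, Nat.find_spec hex⟩
    exact not_le.1 (Nat.find_min hex hi)
  have hmeasle : P {ω | ∃ k ≤ H, 1 ≤ M k ω}
      ≤ ∑ k ∈ Finset.range (H + 1), P (B k) :=
    le_trans (measure_mono hcover) (measure_biUnion_finset_le _ _)
  have hfin : (∑ k ∈ Finset.range (H + 1), P (B k)) ≠ ⊤ := by
    refine (lt_of_le_of_lt (Finset.sum_le_sum fun k _ => prob_le_one) ?_).ne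
    simp only [Finset.sum_const, Finset.card_range, nsmul_eq_mul, mul_one]
    exact ENNReal.natCast_lt_top _
  refine le_trans hmeasle ?_
  rw [ENNReal.le_ofReal_iff_toReal_le hfin (by positivity)]
  rw [ENNReal.toReal_sum (fun k _ => measure_ne_top P _)]
  exact htotal
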